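/- If 2 < m/h ≡ 2 (mod 4), then #{x ∈ F_q^* : Tr(x^(2^h+1) + x) = a} = 2^(m-1) + a - 1 for each a ∈ F_2; in particular the code C_{D_a} has length 2^(m-1) + a - 1. -/

import Mathlib

open Finset
open scoped Classical

section Aux

variable {F : Type} [Field F] [Fintype F] [Algebra (ZMod 2) F]

private lemma aux_char (F : Type) [Field F] [Algebra (ZMod 2) F] : CharP F 2 :=
  charP_of_injective_algebraMap (algebraMap (ZMod 2) F).injective 2

private lemma aux_tr_sq (x : F) :
    Algebra.trace (ZMod 2) F (x ^ 2) = Algebra.trace (ZMod 2) F x := by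
  haveI hchar : CharP F 2 := aux_char F
  let e : F ≃ₐ[ZMod 2] F := AlgEquiv.ofRingEquiv (f := frobeniusEquiv F 2)
    (fun a => by
      show frobenius F 2 _ = _
      rw [frobenius_def, ← map_pow]
      congr 1
      exact ZMod.pow_card a)
  have := Algebra.trace_eq_of_algEquiv e x
  simpa [e, AlgEquiv.ofRingEquiv, frobeniusEquiv_def, frobenius_def] using this

private lemma aux_tr_pow (k : ℕ) (x : F) :
    Algebra.trace (ZMod 2) F (x ^ 2 ^ k) = Algebra.trace (ZMod 2) F x := by
  induction k with
  | zero => simp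
  | succ n ih =>
      have : x ^ 2 ^ (n + 1) = (x ^ 2 ^ n) ^ 2 := by
        rw [← pow_mul, pow_succ]
      rw [this, aux_tr_sq, ih]

omit [Fintype F] [Algebra (ZMod 2) F] in
private lemma aux_pow_pow (x : F) (a b : ℕ) : (x ^ 2 ^ a) ^ 2 ^ b = x ^ 2 ^ (a + b) := by
  rw [← pow_mul, ← pow_add]

omit [Fintype F] [Algebra (ZMod 2) F] in
/-- periodicity of exponents -/
private lemma aux_per {t : F} {c : ℕ} (ht : t ^ 2 ^ c = t) (a b : ℕ) :
    t ^ 2 ^ (c * a + b) = t ^ 2 ^ b := by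
  induction a with
  | zero => simp
  | succ n ih =>
      have h1 : c * (n + 1) + b = (c * n + b) + c := by ring
      rw [h1, ← aux_pow_pow, ih, aux_pow_pow, Nat.add_comm b c, ← aux_pow_pow, ht]

end Aux

section Main

variable {m : ℕ} {F : Type} [Field F] [Fintype F] [Algebra (ZMod 2) F]

/-- trace-zero from the "trace polynomial" vanishing -/
private lemma aux_g_zero_imp_tr_zero (hm : m ≠ 0) (hcard : Fintype.card F = 2 ^ m)
    (t : F) (hg : ∑ i ∈ range m, t ^ 2 ^ i = 0) :
    Algebra.trace (ZMod 2) F t = 0 := by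
  haveI hchar : CharP F 2 := aux_char F
  -- the Artin-Schreier map as an additive hom
  let φ : F →+ F := AddMonoidHom.mk' (fun y => y ^ 2 + y)
    (fun a b => by
      show (a + b) ^ 2 + (a + b) = (a ^ 2 + a) + (b ^ 2 + b)
      rw [add_pow_char a b 2]; ring)
  have hφ : ∀ y : F, φ y = y ^ 2 + y := fun y => rfl
  -- kernel of φ is {0, 1}
  have hker : (AddMonoidHom.ker φ : Set F) = {0, 1} := by
    ext y
    simp only [SetLike.mem_coe, AddMonoidHom.mem_ker, hφ, Set.mem_insert_iff,
      Set.mem_singleton_iff]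
    constructor
    · intro hy
      have hmul : y * (y + 1) = 0 := by linear_combination hy
      rcases mul_eq_zero.mp hmul with h | h
      · exact Or.inl h
      · right
        have h2 := CharTwo.add_self_eq_zero (R := F) 1
        linear_combination h - h2
    · rintro (rfl | rfl)
      · simp
      · rw [one_pow]; exact CharTwo.add_self_eq_zero 1
  have hkercard : Nat.card (AddMonoidHom.ker φ) = 2 := by
    have h1 : Nat.card (AddMonoidHom.ker φ) = Nat.card ({0, 1} : Set F) :=
      Nat.card_congr (Equiv.setCongr hker)
    rw [h1, Nat.card_coe_set_eq, Set.ncard_pair (zero_ne_one)]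
  -- card of range of φ
  have hFcard : Nat.card F = 2 ^ m := by rw [Nat.card_eq_fintype_card, hcard]
  have hrange : Nat.card (AddMonoidHom.range φ) = 2 ^ (m - 1) := by
    have h1 : Nat.card F = Nat.card (F ⧸ AddMonoidHom.ker φ) * Nat.card (AddMonoidHom.ker φ) :=
      AddSubgroup.card_eq_card_quotient_mul_card_addSubgroup _
    have h2 : Nat.card (F ⧸ AddMonoidHom.ker φ) = Nat.card (AddMonoidHom.range φ) :=
      Nat.card_congr (QuotientAddGroup.quotientKerEquivRange φ).toEquiv
    rw [h2, hkercard, hFcard] at h1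
    have h3 : 2 ^ m = 2 ^ (m - 1) * 2 := by
      rw [← pow_succ, Nat.sub_add_cancel (Nat.one_le_iff_ne_zero.mpr hm)]
    rw [h3] at h1
    exact (Nat.eq_of_mul_eq_mul_right (by norm_num) h1.symm)
  -- range φ as a finset
  set Rfin : Finset F := (AddMonoidHom.range φ : Set F).toFinset with hRfin
  have hRcard : Rfin.card = 2 ^ (m - 1) := by
    rw [← hrange, Nat.card_eq_fintype_card, hRfin, Set.toFinset_card]
    exact Fintype.card_congr (Equiv.refl _)
  -- the set where g vanishes
  set S0 : Finset F := univ.filter (fun x => ∑ i ∈ range m, x ^ 2 ^ i = 0) with hS0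
  -- S0 is bounded by roots of a polynomial
  have hS0card : S0.card ≤ 2 ^ (m - 1) := by
    set P : Polynomial F := ∑ i ∈ range m, Polynomial.X ^ 2 ^ i with hP
    have hPne : P ≠ 0 := by
      intro h
      have hco : P.coeff (2 ^ (m - 1)) = 1 := by
        rw [hP, Polynomial.finset_sum_coeff]
        rw [Finset.sum_eq_single (m - 1)]
        · simp
        · intro b hb hbne
          rw [Polynomial.coeff_X_pow, if_neg]
          intro hc
          exact hbne (Nat.pow_right_injective le_rfl hc.symm)
        · intro hmem
          exact absurd (Finset.mem_range.mpr (Nat.sub_lt (Nat.pos_of_ne_zero hm) one_pos)) hmem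
      rw [h] at hco
      simp at hco
    have hdeg : P.natDegree ≤ 2 ^ (m - 1) := by
      apply Polynomial.natDegree_sum_le_of_forall_le
      intro i hi
      rw [Polynomial.natDegree_X_pow]
      exact Nat.pow_le_pow_right (by norm_num) (by simp at hi; omega)
    have hsub : S0 ⊆ P.roots.toFinset := by
      intro x hx
      rw [Multiset.mem_toFinset, Polynomial.mem_roots hPne]
      simp only [hS0, mem_filter] at hx
      simp [Polynomial.IsRoot, hP, Polynomial.eval_finset_sum, hx.2]
    calc S0.card ≤ P.roots.toFinset.card := Finset.card_le_card hsub
      _ ≤ Multiset.card P.roots := Multiset.toFinset_card_le _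
      _ ≤ P.natDegree := Polynomial.card_roots' P
      _ ≤ 2 ^ (m - 1) := hdeg
  -- range φ ⊆ S0
  have hsub2 : Rfin ⊆ S0 := by
    intro x hx
    rw [hRfin, Set.mem_toFinset] at hx
    obtain ⟨y, hy⟩ := hx
    simp only [hS0, mem_filter, mem_univ, true_and]
    rw [hφ] at hy
    rw [← hy]
    have hsplit : ∀ i : ℕ, (y ^ 2 + y) ^ 2 ^ i = (y ^ 2 ^ i) ^ 2 + y ^ 2 ^ i := by
      intro i
      rw [add_pow_char_pow]
      congr 1
      rw [← pow_mul, ← pow_mul, mul_comm]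
    rw [Finset.sum_congr rfl (fun i _ => hsplit i), Finset.sum_add_distrib]
    have hshift : ∑ i ∈ range m, (y ^ 2 ^ i) ^ 2 = ∑ i ∈ range m, y ^ 2 ^ i := by
      have h1 : ∀ i : ℕ, (y ^ 2 ^ i) ^ 2 = y ^ 2 ^ (i + 1) := by
        intro i; rw [← pow_mul, ← pow_succ]
      rw [Finset.sum_congr rfl (fun i _ => h1 i)]
      have h2 := Finset.sum_range_succ' (fun i => y ^ 2 ^ i) m
      have h3 := Finset.sum_range_succ (fun i => y ^ 2 ^ i) m
      have h4 : y ^ 2 ^ m = y ^ 2 ^ 0 := by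
        rw [pow_zero, pow_one, ← hcard]
        exact FiniteField.pow_card y
      rw [h3, h4] at h2
      exact add_right_cancel h2.symm
    rw [hshift]
    exact CharTwo.add_self_eq_zero _
  have heq : Rfin = S0 := Finset.eq_of_subset_of_card_le hsub2 (by omega)
  -- now conclude
  have htmem : t ∈ S0 := by simp [hS0, hg]
  rw [← heq] at htmem
  rw [hRfin, Set.mem_toFinset] at htmem
  obtain ⟨y, hy⟩ := htmem
  rw [hφ] at hy
  rw [← hy, map_add, aux_tr_sq]
  exact CharTwo.add_self_eq_zero _


private lemma aux_exists_u (h : ℕ) (hh : 0 < h) (hdvd : h ∣ m)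
    (hmod : m / h % 4 = 2) (hgt : 2 < m / h) (hcard : Fintype.card F = 2 ^ m) :
    ∃ u : F, u ^ 2 ^ (2 * h) = u ∧
      Algebra.trace (ZMod 2) F (u ^ (2 ^ h + 1) + u) = 1 := by
  haveI hchar : CharP F 2 := aux_char F
  haveI : FiniteDimensional (ZMod 2) F := Module.Finite.of_finite
  set v : ℕ := m / h with hv
  have hm_eq : m = h * v := (Nat.mul_div_cancel' hdvd).symm
  have hveven : v % 2 = 0 := by omega
  set w : ℕ := v / 2 with hw
  have hwodd : w % 2 = 1 := by omega
  have hv2w : v = 2 * w := by omega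
  have hm2 : m = 2 * h * w := by rw [hm_eq, hv2w]; ring
  have hm : m ≠ 0 := by
    have h1 : 0 < h * v := Nat.mul_pos hh (by omega)
    omega
  obtain ⟨x0, hx0⟩ := Algebra.trace_surjective (ZMod 2) F 1
  set u : F := ∑ k ∈ range w, x0 ^ 2 ^ (2 * h * k) with hu
  have hxm : x0 ^ 2 ^ m = x0 := by rw [← hcard]; exact FiniteField.pow_card x0
  have hufix : u ^ 2 ^ (2 * h) = u := by
    have h1 : u ^ 2 ^ (2 * h) = iterateFrobenius F 2 (2 * h) u := by
      rw [iterateFrobenius_def]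
    rw [h1, hu, map_sum]
    have h2 : ∀ k, iterateFrobenius F 2 (2 * h) (x0 ^ 2 ^ (2 * h * k))
        = x0 ^ 2 ^ (2 * h * (k + 1)) := by
      intro k
      rw [iterateFrobenius_def, aux_pow_pow,
        show 2 * h * k + 2 * h = 2 * h * (k + 1) by ring]
    rw [Finset.sum_congr rfl (fun k _ => h2 k)]
    -- shift the sum
    have h3 := Finset.sum_range_succ' (fun k => x0 ^ 2 ^ (2 * h * k)) w
    have h4 := Finset.sum_range_succ (fun k => x0 ^ 2 ^ (2 * h * k)) w
    have h5 : x0 ^ 2 ^ (2 * h * w) = x0 ^ 2 ^ (2 * h * 0) := by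
      rw [← hm2, hxm]; norm_num
    rw [h4, h5] at h3
    exact add_right_cancel h3.symm
  refine ⟨u, hufix, ?_⟩
  rw [map_add]
  -- trace of u is 1
  have htru : Algebra.trace (ZMod 2) F u = 1 := by
    rw [hu, map_sum]
    rw [Finset.sum_congr rfl (fun k _ => aux_tr_pow (2 * h * k) x0)]
    rw [Finset.sum_const, Finset.card_range, hx0]
    have h7 : (w : ZMod 2) = 1 := by
      rw [show w = 2 * (w / 2) + 1 by omega]
      push_cast
      rw [show (2 : ZMod 2) = 0 from rfl, zero_mul, zero_add]
    rw [nsmul_eq_mul, mul_one, h7]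
  -- trace of u^(2^h+1) is 0
  have htrt : Algebra.trace (ZMod 2) F (u ^ (2 ^ h + 1)) = 0 := by
    set t : F := u ^ (2 ^ h + 1) with htdef
    have ht : t ^ 2 ^ h = t := by
      have he : (2 ^ h + 1) * 2 ^ h = 2 ^ (2 * h) + 2 ^ h := by
        rw [add_mul, one_mul, ← pow_add]; ring_nf
      rw [htdef, ← pow_mul, he, pow_add, hufix, pow_succ]
      ring
    apply aux_g_zero_imp_tr_zero hm hcard
    have hsum : ∀ j : ℕ, ∑ i ∈ range (h * j), t ^ 2 ^ i
        = j • ∑ i ∈ range h, t ^ 2 ^ i := by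
      intro j
      induction j with
      | zero => simp
      | succ n ih =>
          have : h * (n + 1) = h * n + h := by ring
          rw [this, Finset.sum_range_add, ih]
          have hper : ∀ i, t ^ 2 ^ (h * n + i) = t ^ 2 ^ i := fun i => aux_per ht n i
          rw [Finset.sum_congr rfl (fun i _ => hper i), succ_nsmul]
    rw [hm_eq, hsum v]
    have hv2 : v = (v / 2) * 2 := by omega
    rw [hv2, mul_smul]
    have h2s : (2 : ℕ) • ∑ i ∈ range h, t ^ 2 ^ i = 0 := by
      rw [two_nsmul]; exact CharTwo.add_self_eq_zero _
    rw [h2s, smul_zero]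
  rw [htrt, htru, zero_add]

private lemma aux_shift (h : ℕ) (hh : 0 < h) (hdvd : h ∣ m)
    (hmod : m / h % 4 = 2) (hgt : 2 < m / h) (hcard : Fintype.card F = 2 ^ m)
    (u : F) (hufix : u ^ 2 ^ (2 * h) = u) (x : F) :
    Algebra.trace (ZMod 2) F ((x + u) ^ (2 ^ h + 1) + (x + u))
      = Algebra.trace (ZMod 2) F (x ^ (2 ^ h + 1) + x)
        + Algebra.trace (ZMod 2) F (u ^ (2 ^ h + 1) + u) := by
  haveI hchar : CharP F 2 := aux_char F
  set v : ℕ := m / h with hv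
  have hm_eq : m = h * v := (Nat.mul_div_cancel' hdvd).symm
  have hveven : v % 2 = 0 := by omega
  have hm : m ≠ 0 := by
    have h1 : 0 < h * v := Nat.mul_pos hh (by omega)
    omega
  have hhm : h ≤ m := Nat.le_of_dvd (Nat.pos_of_ne_zero hm) hdvd
  have hpow_card : ∀ y : F, y ^ 2 ^ m = y := fun y => by
    rw [← hcard]; exact FiniteField.pow_card y
  have hexpand : (x + u) ^ (2 ^ h + 1) + (x + u)
      = (x ^ (2 ^ h + 1) + x) + (x ^ 2 ^ h * u + u ^ 2 ^ h * x) + (u ^ (2 ^ h + 1) + u) := by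
    have hadd : (x + u) ^ 2 ^ h = x ^ 2 ^ h + u ^ 2 ^ h := add_pow_char_pow x u 2 h
    rw [pow_succ, hadd, pow_succ, pow_succ]
    ring
  rw [hexpand, map_add, map_add]
  have hcross : Algebra.trace (ZMod 2) F (x ^ 2 ^ h * u + u ^ 2 ^ h * x) = 0 := by
    rw [map_add]
    have h1 : Algebra.trace (ZMod 2) F (x ^ 2 ^ h * u)
        = Algebra.trace (ZMod 2) F (u ^ 2 ^ h * x) := by
      rw [← aux_tr_pow (m - h) (x ^ 2 ^ h * u)]
      congr 1
      rw [mul_pow, aux_pow_pow]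
      have hmh : h + (m - h) = m := by omega
      rw [hmh, hpow_card x]
      set j : ℕ := (v - 2) / 2 with hjdef
      have hj' : v = 2 * j + 2 := by omega
      have hmj : m = 2 * (h * j) + 2 * h := by rw [hm_eq, hj']; ring
      have hmhj : m - h = 2 * h * j + h := by
        have : 2 * h * j = 2 * (h * j) := by ring
        omega
      rw [hmhj, aux_per hufix j h]
      ring
    rw [h1]
    exact CharTwo.add_self_eq_zero _
  rw [hcross, add_zero]

end Main

/-- If `2 < m/h ≡ 2 (mod 4)`, then `#{x ∈ F_q^* : Tr(x^(2^h+1)+x) = a} = 2^(m-1)+a-1`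
for each `a ∈ F_2`; this is the length of the code `C_{D_a}`. -/
theorem stmt10 (m h : ℕ) (hh : 0 < h) (hdvd : h ∣ m) (hne : h ≠ m)
    (hmod : m / h % 4 = 2) (hgt : 2 < m / h)
    (F : Type) [Field F] [Fintype F] [Algebra (ZMod 2) F]
    (hcard : Fintype.card F = 2 ^ m) :
    ∀ a : ZMod 2,
      ((univ.filter fun x : F =>
          x ≠ 0 ∧ Algebra.trace (ZMod 2) F (x ^ (2 ^ h + 1) + x) = a).card : ℤ) =
        2 ^ (m - 1) + (a.val : ℤ) - 1 := by
  intro a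
  haveI hchar : CharP F 2 := aux_char F
  have hm_eq : m = h * (m / h) := (Nat.mul_div_cancel' hdvd).symm
  have hm : m ≠ 0 := by
    have h1 : 0 < h * (m / h) := Nat.mul_pos hh (by omega)
    omega
  obtain ⟨u, hufix, hutr⟩ := aux_exists_u (m := m) h hh hdvd hmod hgt hcard
  set f : F → ZMod 2 := fun x => Algebra.trace (ZMod 2) F (x ^ (2 ^ h + 1) + x) with hf
  have hflip : ∀ x : F, f (x + u) = f x + 1 := by
    intro x
    show Algebra.trace (ZMod 2) F ((x + u) ^ (2 ^ h + 1) + (x + u)) = _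
    rw [aux_shift h hh hdvd hmod hgt hcard u hufix x, hutr]
  have hbijcard : ∀ b : ZMod 2,
      (univ.filter fun x : F => f x = b).card
        = (univ.filter fun x : F => f x = b + 1).card := by
    intro b
    apply Finset.card_bij' (i := fun x _ => x + u) (j := fun y _ => y + u)
    · intro x hx
      rw [mem_filter] at hx ⊢
      exact ⟨mem_univ _, by rw [hflip, hx.2]⟩
    · intro y hy
      rw [mem_filter] at hy ⊢
      refine ⟨mem_univ _, ?_⟩
      rw [hflip, hy.2, add_assoc]
      rw [show (1 : ZMod 2) + 1 = 0 from rfl, add_zero]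
    · intro x hx
      rw [add_assoc, CharTwo.add_self_eq_zero, add_zero]
    · intro y hy
      rw [add_assoc, CharTwo.add_self_eq_zero, add_zero]
  have hzmod : ∀ c : ZMod 2, c = 0 ∨ c = 1 := by decide
  have key : ∀ b : ZMod 2, (univ.filter fun x : F => f x = b).card = 2 ^ (m - 1) := by
    have h01 : (univ.filter fun x : F => f x = 0).card
        = (univ.filter fun x : F => f x = 1).card := by
      have := hbijcard 0
      rwa [show (0 : ZMod 2) + 1 = 1 from rfl] at this
    have hneg : (univ.filter fun x : F => ¬ f x = 0) = univ.filter fun x : F => f x = 1 := by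
      apply Finset.filter_congr
      intro x _
      rcases hzmod (f x) with hc | hc <;> simp [hc]
    have hsplit := Finset.card_filter_add_card_filter_not
      (s := (univ : Finset F)) (p := fun x : F => f x = 0)
    rw [hneg, Finset.card_univ, hcard] at hsplit
    have hpow : 2 ^ m = 2 ^ (m - 1) + 2 ^ (m - 1) := by
      conv_lhs => rw [show m = (m - 1) + 1 by omega]
      rw [pow_succ]
      ring
    intro b
    rcases hzmod b with rfl | rfl <;> omega
  rcases hzmod a with rfl | rfl
  · have hzero_mem : (0 : F) ∈ univ.filter fun x : F => f x = 0 := by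
      rw [mem_filter]
      refine ⟨mem_univ _, ?_⟩
      show Algebra.trace (ZMod 2) F ((0 : F) ^ (2 ^ h + 1) + 0) = 0
      rw [zero_pow (Nat.add_one_ne_zero _), add_zero, map_zero]
    have hset : (univ.filter fun x : F => x ≠ 0 ∧ f x = 0)
        = (univ.filter fun x : F => f x = 0).erase 0 := by
      ext x
      simp only [mem_filter, Finset.mem_erase, mem_univ, true_and]
    rw [hset, Finset.card_erase_of_mem hzero_mem, key 0]
    have h1 : (1 : ℕ) ≤ 2 ^ (m - 1) := Nat.one_le_two_pow
    rw [Nat.cast_sub h1]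
    simp
  · have hset : (univ.filter fun x : F => x ≠ 0 ∧ f x = 1)
        = univ.filter fun x : F => f x = 1 := by
      ext x
      simp only [mem_filter, mem_univ, true_and]
      constructor
      · exact fun hx => hx.2
      · intro hx
        refine ⟨?_, hx⟩
        rintro rfl
        rw [show f 0 = 0 by
          show Algebra.trace (ZMod 2) F ((0 : F) ^ (2 ^ h + 1) + 0) = 0
          rw [zero_pow (Nat.add_one_ne_zero _), add_zero, map_zero]] at hx
        exact absurd hx (by decide)
    rw [hset, key 1]
    simp [ZMod.val_one]
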